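/- For a partition λ of n, define m(λ) = 1 if λ = (n), (p,p), (p,p,p), or (p+q+r+1, p+q+1, p+1, 1) with p,q,r ≥ 0; m(λ) = 2 if λ = (p+q, p), (p+q, p, p), or (p+q, p+q, p) with p,q ≥ 1; m(λ) = 3 if λ = (p+q+r, p+q, p) with p,q,r ≥ 1; and m(λ) = 0 otherwise. Then the sum Σ_{λ ⊢ n} m(λ) equals (n² + n + δ)/3, where δ = 1 if n ≡ 1 (mod 3) and δ = 0 otherwise. -/

import Mathlib

section Helpers

open Finset

lemma sorted_ms_eq {l l' : List ℕ} (h : l.Pairwise (· ≥ ·)) (h' : l'.Pairwise (· ≥ ·))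
    (e : (l : Multiset ℕ) = (l' : Multiset ℕ)) : l = l' :=
  List.Perm.eq_of_pairwise (fun _ _ _ _ h1 h2 => le_antisymm h2 h1) h h' (Multiset.coe_eq_coe.mp e)

lemma pair_eq {a b a' b' : ℕ} (h : b ≤ a) (h' : b' ≤ a') :
    ({a, b} : Multiset ℕ) = {a', b'} ↔ a = a' ∧ b = b' := by
  constructor
  · intro e
    have := sorted_ms_eq (l := [a,b]) (l' := [a',b']) (by simp [List.pairwise_cons]; omega)
      (by simp [List.pairwise_cons]; omega) e
    simp_all
  · rintro ⟨rfl, rfl⟩; rfl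

lemma triple_eq {a b c a' b' c' : ℕ} (h1 : b ≤ a) (h2 : c ≤ b) (h1' : b' ≤ a') (h2' : c' ≤ b') :
    ({a, b, c} : Multiset ℕ) = {a', b', c'} ↔ a = a' ∧ b = b' ∧ c = c' := by
  constructor
  · intro e
    have := sorted_ms_eq (l := [a,b,c]) (l' := [a',b',c']) (by simp [List.pairwise_cons]; omega)
      (by simp [List.pairwise_cons]; omega) e
    simp_all
  · rintro ⟨rfl, rfl, rfl⟩; rfl

lemma quad_eq {a b c d a' b' c' d' : ℕ} (h1 : b ≤ a) (h2 : c ≤ b) (h3 : d ≤ c)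
    (h1' : b' ≤ a') (h2' : c' ≤ b') (h3' : d' ≤ c') :
    ({a, b, c, d} : Multiset ℕ) = {a', b', c', d'} ↔ a = a' ∧ b = b' ∧ c = c' ∧ d = d' := by
  constructor
  · intro e
    have := sorted_ms_eq (l := [a,b,c,d]) (l' := [a',b',c',d']) (by simp [List.pairwise_cons]; omega)
      (by simp [List.pairwise_cons]; omega) e
    simp_all
  · rintro ⟨rfl, rfl, rfl, rfl⟩; rfl

end Helpers

open Classical in
/-- The multiplicity `m_λ(Ṽ₃)` of an irreducible `S_n`-module in `P_n(Ṽ₃)`,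
as a function of the multiset of parts of the partition `λ` (Theorem 1). -/
noncomputable def multV3 (s : Multiset ℕ) : ℕ :=
  if (∃ n : ℕ, 1 ≤ n ∧ s = {n}) ∨ (∃ p : ℕ, 1 ≤ p ∧ s = {p, p}) ∨
      (∃ p : ℕ, 1 ≤ p ∧ s = {p, p, p}) ∨
      (∃ p q r : ℕ, s = {p + q + r + 1, p + q + 1, p + 1, 1}) then 1
  else if ∃ p q : ℕ, 1 ≤ p ∧ 1 ≤ q ∧
      (s = {p + q, p} ∨ s = {p + q, p, p} ∨ s = {p + q, p + q, p}) then 2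
  else if ∃ p q r : ℕ, 1 ≤ p ∧ 1 ≤ q ∧ 1 ≤ r ∧ s = {p + q + r, p + q, p} then 3
  else 0

section Main

open Finset

def C1 (s : Multiset ℕ) : Prop :=
  (∃ n : ℕ, 1 ≤ n ∧ s = {n}) ∨ (∃ p : ℕ, 1 ≤ p ∧ s = {p, p}) ∨
      (∃ p : ℕ, 1 ≤ p ∧ s = {p, p, p}) ∨
      (∃ p q r : ℕ, s = {p + q + r + 1, p + q + 1, p + 1, 1})

def C2 (s : Multiset ℕ) : Prop :=
  ∃ p q : ℕ, 1 ≤ p ∧ 1 ≤ q ∧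
      (s = {p + q, p} ∨ s = {p + q, p, p} ∨ s = {p + q, p + q, p})

def C3 (s : Multiset ℕ) : Prop :=
  ∃ p q r : ℕ, 1 ≤ p ∧ 1 ≤ q ∧ 1 ≤ r ∧ s = {p + q + r, p + q, p}

lemma not_C1_C2 {s : Multiset ℕ} (h1 : C1 s) (h2 : C2 s) : False := by
  obtain ⟨P, Q, hP, hQ, (e | e | e)⟩ := h2 <;>
    obtain (⟨m, hm, rfl⟩ | ⟨p, hp, rfl⟩ | ⟨p, hp, rfl⟩ | ⟨p, q, r, rfl⟩) := h1
  · have := congrArg Multiset.card e; simp at this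
  · rw [pair_eq le_rfl (by omega)] at e; omega
  · have := congrArg Multiset.card e; simp at this
  · have := congrArg Multiset.card e; simp at this
  · have := congrArg Multiset.card e; simp at this
  · have := congrArg Multiset.card e; simp at this
  · rw [triple_eq le_rfl le_rfl (by omega) (by omega)] at e; omega
  · have := congrArg Multiset.card e; simp at this
  · have := congrArg Multiset.card e; simp at this
  · have := congrArg Multiset.card e; simp at this
  · rw [triple_eq le_rfl le_rfl le_rfl (by omega)] at e; omega
  · have := congrArg Multiset.card e; simp at this

lemma not_C1_C3 {s : Multiset ℕ} (h1 : C1 s) (h3 : C3 s) : False := by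
  obtain ⟨P, Q, R, hP, hQ, hR, e⟩ := h3
  obtain (⟨m, hm, rfl⟩ | ⟨p, hp, rfl⟩ | ⟨p, hp, rfl⟩ | ⟨p, q, r, rfl⟩) := h1
  · have := congrArg Multiset.card e; simp at this
  · have := congrArg Multiset.card e; simp at this
  · rw [triple_eq le_rfl le_rfl (by omega) (by omega)] at e; omega
  · have := congrArg Multiset.card e; simp at this

lemma not_C2_C3 {s : Multiset ℕ} (h2 : C2 s) (h3 : C3 s) : False := by
  obtain ⟨A, B, C, hA, hB, hC, e'⟩ := h3
  obtain ⟨P, Q, hP, hQ, (rfl | rfl | rfl)⟩ := h2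
  · have := congrArg Multiset.card e'; simp at this
  · rw [triple_eq (by omega) le_rfl (by omega) (by omega)] at e'; omega
  · rw [triple_eq le_rfl (by omega) (by omega) (by omega)] at e'; omega

open Classical in
lemma multV3_def (s : Multiset ℕ) :
    multV3 s = if C1 s then 1 else if C2 s then 2 else if C3 s then 3 else 0 := by
  unfold multV3 C1 C2 C3
  congr

open Classical in
lemma multV3_eq (s : Multiset ℕ) :
    multV3 s = (if C1 s then 1 else 0) + ((if C2 s then 2 else 0) + (if C3 s then 3 else 0)) := by
  rw [multV3_def]
  by_cases h1 : C1 s <;> by_cases h2 : C2 s <;> by_cases h3 : C3 s <;>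
    first
    | (exact absurd (not_C1_C2 h1 h2) not_false)
    | (exact absurd (not_C1_C3 h1 h3) not_false)
    | (exact absurd (not_C2_C3 h2 h3) not_false)
    | simp [h1, h2, h3]

open Classical in
lemma sum_split (n : ℕ) : ∑ lam : Nat.Partition n, multV3 lam.parts =
    (univ.filter fun lam : Nat.Partition n => C1 lam.parts).card
    + (2 * (univ.filter fun lam : Nat.Partition n => C2 lam.parts).card
    + 3 * (univ.filter fun lam : Nat.Partition n => C3 lam.parts).card) := by
  simp only [multV3_eq]
  rw [Finset.sum_add_distrib, Finset.sum_add_distrib, Finset.card_filter, Finset.card_filter,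
    Finset.card_filter, Finset.mul_sum, Finset.mul_sum]
  refine congrArg₂ (·+·) rfl (congrArg₂ (·+·) ?_ ?_) <;>
    exact Finset.sum_congr rfl fun x _ => by split_ifs <;> simp
open Classical

lemma disj_filter {α : Type*} [Fintype α] {P Q : α → Prop}
    (h : ∀ a, P a → Q a → False) :
    Disjoint (univ.filter P) (univ.filter Q) := by
  rw [Finset.disjoint_left]
  intro a ha hb
  simp only [mem_filter, mem_univ, true_and] at ha hb
  exact h a ha hb

lemma card_mismatch {s t : Multiset ℕ} (e : s = t) (h : s.card ≠ t.card) : False :=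
  h (congrArg Multiset.card e)

lemma cardC1_split (n : ℕ) :
    (univ.filter fun lam : Nat.Partition n => C1 lam.parts).card
    = (univ.filter fun lam : Nat.Partition n => ∃ m, 1 ≤ m ∧ lam.parts = {m}).card
    + ((univ.filter fun lam : Nat.Partition n => ∃ p, 1 ≤ p ∧ lam.parts = {p, p}).card
    + ((univ.filter fun lam : Nat.Partition n => ∃ p, 1 ≤ p ∧ lam.parts = {p, p, p}).card
    + (univ.filter fun lam : Nat.Partition n =>
        ∃ p q r, lam.parts = {p+q+r+1, p+q+1, p+1, 1}).card)) := by
  have dAB : Disjoint (univ.filter fun lam : Nat.Partition n => ∃ m, 1 ≤ m ∧ lam.parts = {m})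
      (univ.filter fun lam : Nat.Partition n => ∃ p, 1 ≤ p ∧ lam.parts = {p, p}) :=
    disj_filter fun lam ⟨m, _, e1⟩ ⟨p, _, e2⟩ =>
      card_mismatch (e1 ▸ e2) (by simp)
  have dAC : Disjoint (univ.filter fun lam : Nat.Partition n => ∃ m, 1 ≤ m ∧ lam.parts = {m})
      (univ.filter fun lam : Nat.Partition n => ∃ p, 1 ≤ p ∧ lam.parts = {p, p, p}) :=
    disj_filter fun lam ⟨m, _, e1⟩ ⟨p, _, e2⟩ =>
      card_mismatch (e1 ▸ e2) (by simp)
  have dAD : Disjoint (univ.filter fun lam : Nat.Partition n => ∃ m, 1 ≤ m ∧ lam.parts = {m})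
      (univ.filter fun lam : Nat.Partition n =>
        ∃ p q r, lam.parts = {p+q+r+1, p+q+1, p+1, 1}) :=
    disj_filter fun lam ⟨m, _, e1⟩ ⟨p, q, r, e2⟩ =>
      card_mismatch (e1 ▸ e2) (by simp)
  have dBC : Disjoint (univ.filter fun lam : Nat.Partition n => ∃ p, 1 ≤ p ∧ lam.parts = {p, p})
      (univ.filter fun lam : Nat.Partition n => ∃ p, 1 ≤ p ∧ lam.parts = {p, p, p}) :=
    disj_filter fun lam ⟨m, _, e1⟩ ⟨p, _, e2⟩ =>
      card_mismatch (e1 ▸ e2) (by simp)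
  have dBD : Disjoint (univ.filter fun lam : Nat.Partition n => ∃ p, 1 ≤ p ∧ lam.parts = {p, p})
      (univ.filter fun lam : Nat.Partition n =>
        ∃ p q r, lam.parts = {p+q+r+1, p+q+1, p+1, 1}) :=
    disj_filter fun lam ⟨m, _, e1⟩ ⟨p, q, r, e2⟩ =>
      card_mismatch (e1 ▸ e2) (by simp)
  have dCD : Disjoint (univ.filter fun lam : Nat.Partition n => ∃ p, 1 ≤ p ∧ lam.parts = {p, p, p})
      (univ.filter fun lam : Nat.Partition n =>
        ∃ p q r, lam.parts = {p+q+r+1, p+q+1, p+1, 1}) :=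
    disj_filter fun lam ⟨m, _, e1⟩ ⟨p, q, r, e2⟩ =>
      card_mismatch (e1 ▸ e2) (by simp)
  have e : (univ.filter fun lam : Nat.Partition n => C1 lam.parts)
      = (univ.filter fun lam : Nat.Partition n => ∃ m, 1 ≤ m ∧ lam.parts = {m})
      ∪ ((univ.filter fun lam : Nat.Partition n => ∃ p, 1 ≤ p ∧ lam.parts = {p, p})
      ∪ ((univ.filter fun lam : Nat.Partition n => ∃ p, 1 ≤ p ∧ lam.parts = {p, p, p})
      ∪ (univ.filter fun lam : Nat.Partition n =>
          ∃ p q r, lam.parts = {p+q+r+1, p+q+1, p+1, 1}))) := by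
    ext lam
    simp only [mem_filter, mem_univ, true_and, mem_union]
    simp only [C1]
  rw [e, card_union_of_disjoint (Finset.disjoint_union_right.mpr
      ⟨dAB, Finset.disjoint_union_right.mpr ⟨dAC, dAD⟩⟩),
    card_union_of_disjoint (Finset.disjoint_union_right.mpr ⟨dBC, dBD⟩),
    card_union_of_disjoint dCD]

lemma cardC2_split (n : ℕ) :
    (univ.filter fun lam : Nat.Partition n => C2 lam.parts).card
    = (univ.filter fun lam : Nat.Partition n =>
        ∃ p q, 1 ≤ p ∧ 1 ≤ q ∧ lam.parts = {p + q, p}).card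
    + ((univ.filter fun lam : Nat.Partition n =>
        ∃ p q, 1 ≤ p ∧ 1 ≤ q ∧ lam.parts = {p + q, p, p}).card
    + (univ.filter fun lam : Nat.Partition n =>
        ∃ p q, 1 ≤ p ∧ 1 ≤ q ∧ lam.parts = {p + q, p + q, p}).card) := by
  have dAB : Disjoint (univ.filter fun lam : Nat.Partition n =>
        ∃ p q, 1 ≤ p ∧ 1 ≤ q ∧ lam.parts = {p + q, p})
      (univ.filter fun lam : Nat.Partition n =>
        ∃ p q, 1 ≤ p ∧ 1 ≤ q ∧ lam.parts = {p + q, p, p}) :=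
    disj_filter fun lam ⟨p, q, _, _, e1⟩ ⟨a, b, _, _, e2⟩ =>
      card_mismatch (e1 ▸ e2) (by simp)
  have dAC : Disjoint (univ.filter fun lam : Nat.Partition n =>
        ∃ p q, 1 ≤ p ∧ 1 ≤ q ∧ lam.parts = {p + q, p})
      (univ.filter fun lam : Nat.Partition n =>
        ∃ p q, 1 ≤ p ∧ 1 ≤ q ∧ lam.parts = {p + q, p + q, p}) :=
    disj_filter fun lam ⟨p, q, _, _, e1⟩ ⟨a, b, _, _, e2⟩ =>
      card_mismatch (e1 ▸ e2) (by simp)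
  have dBC : Disjoint (univ.filter fun lam : Nat.Partition n =>
        ∃ p q, 1 ≤ p ∧ 1 ≤ q ∧ lam.parts = {p + q, p, p})
      (univ.filter fun lam : Nat.Partition n =>
        ∃ p q, 1 ≤ p ∧ 1 ≤ q ∧ lam.parts = {p + q, p + q, p}) :=
    disj_filter fun lam ⟨p, q, hp, hq, e1⟩ ⟨a, b, ha, hb, e2⟩ => by
      rw [e1, triple_eq (by omega) (by omega) (by omega) (by omega)] at e2
      omega
  have e : (univ.filter fun lam : Nat.Partition n => C2 lam.parts)
      = (univ.filter fun lam : Nat.Partition n =>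
          ∃ p q, 1 ≤ p ∧ 1 ≤ q ∧ lam.parts = {p + q, p})
      ∪ ((univ.filter fun lam : Nat.Partition n =>
          ∃ p q, 1 ≤ p ∧ 1 ≤ q ∧ lam.parts = {p + q, p, p})
      ∪ (univ.filter fun lam : Nat.Partition n =>
          ∃ p q, 1 ≤ p ∧ 1 ≤ q ∧ lam.parts = {p + q, p + q, p})) := by
    ext lam
    simp only [mem_filter, mem_univ, true_and, mem_union]
    simp only [C2]
    constructor
    · rintro ⟨p, q, hp, hq, (e | e | e)⟩
      · exact Or.inl ⟨p, q, hp, hq, e⟩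
      · exact Or.inr (Or.inl ⟨p, q, hp, hq, e⟩)
      · exact Or.inr (Or.inr ⟨p, q, hp, hq, e⟩)
    · rintro (⟨p, q, hp, hq, e⟩ | ⟨p, q, hp, hq, e⟩ | ⟨p, q, hp, hq, e⟩)
      exacts [⟨p, q, hp, hq, Or.inl e⟩, ⟨p, q, hp, hq, Or.inr (Or.inl e)⟩,
        ⟨p, q, hp, hq, Or.inr (Or.inr e)⟩]
  rw [e, card_union_of_disjoint (Finset.disjoint_union_right.mpr ⟨dAB, dAC⟩),
    card_union_of_disjoint dBC]
def Tt4 (n : ℕ) : ℕ := ((range (n+1) ×ˢ range (n+1)).filter fun x => 3*x.1+2*x.2+4 ≤ n).card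
def Dd5 (n : ℕ) : ℕ := ((range (n+1) ×ˢ range (n+1)).filter fun x => 3*x.1+2*x.2+5 = n).card
def Tt6 (n : ℕ) : ℕ := ((range (n+1) ×ˢ range (n+1)).filter fun x => 3*x.1+2*x.2+6 ≤ n).card


lemma cardC1a (n : ℕ) (hn : 1 ≤ n) :
    (univ.filter fun lam : Nat.Partition n => ∃ m, 1 ≤ m ∧ lam.parts = {m}).card = 1 := by
  rw [Finset.card_eq_one]
  refine ⟨⟨{n}, by intro i hi; simp at hi; omega, by simp⟩, ?_⟩
  ext lam
  simp only [Finset.mem_filter, Finset.mem_univ, true_and, Finset.mem_singleton]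
  constructor
  · rintro ⟨m, hm, e⟩
    have hs := lam.parts_sum
    rw [e] at hs; simp at hs
    exact Nat.Partition.ext (by rw [e, hs])
  · rintro rfl; exact ⟨n, hn, rfl⟩

lemma cardC1b (n : ℕ) (hn : 1 ≤ n) :
    (univ.filter fun lam : Nat.Partition n => ∃ p, 1 ≤ p ∧ lam.parts = {p, p}).card
      = if 2 ∣ n then 1 else 0 := by
  split_ifs with h
  · obtain ⟨k, rfl⟩ := h
    have hk : 1 ≤ k := by omega
    rw [Finset.card_eq_one]
    refine ⟨⟨{k, k}, by intro i hi; simp at hi; omega, by simp; omega⟩, ?_⟩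
    ext lam
    simp only [Finset.mem_filter, Finset.mem_univ, true_and, Finset.mem_singleton]
    constructor
    · rintro ⟨p, hp, e⟩
      have hs := lam.parts_sum; rw [e] at hs; simp at hs
      have hpk : p = k := by omega
      subst hpk
      exact Nat.Partition.ext (by rw [e])
    · rintro rfl; exact ⟨k, hk, rfl⟩
  · rw [Finset.card_eq_zero, Finset.filter_eq_empty_iff]
    rintro lam - ⟨p, hp, e⟩
    have hs := lam.parts_sum; rw [e] at hs; simp at hs
    exact h ⟨p, by omega⟩

lemma cardC1c (n : ℕ) (hn : 1 ≤ n) :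
    (univ.filter fun lam : Nat.Partition n => ∃ p, 1 ≤ p ∧ lam.parts = {p, p, p}).card
      = if 3 ∣ n then 1 else 0 := by
  split_ifs with h
  · obtain ⟨k, rfl⟩ := h
    have hk : 1 ≤ k := by omega
    rw [Finset.card_eq_one]
    refine ⟨⟨{k, k, k}, by intro i hi; simp at hi; omega, by simp; omega⟩, ?_⟩
    ext lam
    simp only [Finset.mem_filter, Finset.mem_univ, true_and, Finset.mem_singleton]
    constructor
    · rintro ⟨p, hp, e⟩
      have hs := lam.parts_sum; rw [e] at hs; simp at hs
      have hpk : p = k := by omega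
      subst hpk
      exact Nat.Partition.ext (by rw [e])
    · rintro rfl; exact ⟨k, hk, rfl⟩
  · rw [Finset.card_eq_zero, Finset.filter_eq_empty_iff]
    rintro lam - ⟨p, hp, e⟩
    have hs := lam.parts_sum; rw [e] at hs; simp at hs
    exact h ⟨p, by omega⟩

def quadPart (n p q : ℕ) (h : 3*p+2*q+4 ≤ n) : Nat.Partition n :=
  ⟨{p + q + (n - (3*p+2*q+4)) + 1, p + q + 1, p + 1, 1},
   by intro i hi; simp at hi; omega,
   by simp; omega⟩

lemma cardC1d (n : ℕ) :
    (univ.filter fun lam : Nat.Partition n =>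
      ∃ p q r, lam.parts = {p+q+r+1, p+q+1, p+1, 1}).card = Tt4 n := by
  rw [Tt4]
  refine (Finset.card_bij
    (fun x hx => quadPart n x.1 x.2 (by simp only [Finset.mem_filter] at hx; exact hx.2))
    ?_ ?_ ?_).symm
  · intro x hx
    simp only [Finset.mem_filter, Finset.mem_univ, true_and]
    exact ⟨x.1, x.2, n - (3*x.1+2*x.2+4), rfl⟩
  · intro a ha b hb e
    have e' := congrArg Nat.Partition.parts e
    simp only [quadPart] at e'
    rw [quad_eq (by omega) (by omega) (by omega) (by omega) (by omega) (by omega)] at e'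
    have : a.1 = b.1 ∧ a.2 = b.2 := by omega
    exact Prod.ext this.1 this.2
  · intro lam hlam
    simp only [Finset.mem_filter, Finset.mem_univ, true_and] at hlam
    obtain ⟨p, q, r, e⟩ := hlam
    have hs := lam.parts_sum; rw [e] at hs; simp at hs
    refine ⟨(p, q), ?_, ?_⟩
    · simp only [Finset.mem_filter, Finset.mem_product, Finset.mem_range]
      omega
    · refine Nat.Partition.ext ?_
      show ({p + q + (n - (3*p+2*q+4)) + 1, p + q + 1, p + 1, 1} : Multiset ℕ) = lam.parts
      rw [e]
      have : n - (3*p+2*q+4) = r := by omega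
      rw [this]
def twoPart (n p : ℕ) (h1 : 1 ≤ p) (h2 : 2*p + 1 ≤ n) : Nat.Partition n :=
  ⟨{n - p, p}, by intro i hi; simp at hi; omega, by simp; omega⟩

lemma cardC2a (n : ℕ) :
    (univ.filter fun lam : Nat.Partition n =>
      ∃ p q, 1 ≤ p ∧ 1 ≤ q ∧ lam.parts = {p + q, p}).card = (n-1)/2 := by
  have h2 : (Finset.Icc 1 ((n-1)/2)).card = (n-1)/2 := by
    rw [Nat.card_Icc]; omega
  rw [← h2]
  refine (Finset.card_bij
    (fun p hp => twoPart n p (by simp only [Finset.mem_Icc] at hp; omega)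
      (by simp only [Finset.mem_Icc] at hp; omega)) ?_ ?_ ?_).symm
  · intro p hp
    simp only [Finset.mem_Icc] at hp
    simp only [Finset.mem_filter, Finset.mem_univ, true_and]
    refine ⟨p, n - 2*p, hp.1, by omega, ?_⟩
    simp only [twoPart]
    rw [show n - p = p + (n - 2*p) by omega]
  · intro a ha b hb e
    simp only [Finset.mem_Icc] at ha hb
    have e' := congrArg Nat.Partition.parts e
    simp only [twoPart] at e'
    rw [pair_eq (by omega) (by omega)] at e'
    omega
  · intro lam hlam
    simp only [Finset.mem_filter, Finset.mem_univ, true_and] at hlam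
    obtain ⟨p, q, hp, hq, e⟩ := hlam
    have hs := lam.parts_sum; rw [e] at hs; simp at hs
    refine ⟨p, by simp only [Finset.mem_Icc]; omega, ?_⟩
    refine Nat.Partition.ext ?_
    simp only [twoPart]
    rw [e, show n - p = p + q by omega]

def threePart (n p : ℕ) (h1 : 1 ≤ p) (h2 : 3*p + 1 ≤ n) : Nat.Partition n :=
  ⟨{n - 2*p, p, p}, by intro i hi; simp at hi; omega, by simp; omega⟩

lemma cardC2b (n : ℕ) :
    (univ.filter fun lam : Nat.Partition n =>
      ∃ p q, 1 ≤ p ∧ 1 ≤ q ∧ lam.parts = {p + q, p, p}).card = (n-1)/3 := by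
  have h2 : (Finset.Icc 1 ((n-1)/3)).card = (n-1)/3 := by
    rw [Nat.card_Icc]; omega
  rw [← h2]
  refine (Finset.card_bij
    (fun p hp => threePart n p (by simp only [Finset.mem_Icc] at hp; omega)
      (by simp only [Finset.mem_Icc] at hp; omega)) ?_ ?_ ?_).symm
  · intro p hp
    simp only [Finset.mem_Icc] at hp
    simp only [Finset.mem_filter, Finset.mem_univ, true_and]
    refine ⟨p, n - 3*p, hp.1, by omega, ?_⟩
    simp only [threePart]
    rw [show n - 2*p = p + (n - 3*p) by omega]
  · intro a ha b hb e
    simp only [Finset.mem_Icc] at ha hb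
    have e' := congrArg Nat.Partition.parts e
    simp only [threePart] at e'
    rw [triple_eq (by omega) (by omega) (by omega) (by omega)] at e'
    omega
  · intro lam hlam
    simp only [Finset.mem_filter, Finset.mem_univ, true_and] at hlam
    obtain ⟨p, q, hp, hq, e⟩ := hlam
    have hs := lam.parts_sum; rw [e] at hs; simp at hs
    refine ⟨p, by simp only [Finset.mem_Icc]; omega, ?_⟩
    refine Nat.Partition.ext ?_
    simp only [threePart]
    rw [e, show n - 2*p = p + q by omega]

def ccPart (n p q : ℕ) (h : 3*p+2*q+5 = n) : Nat.Partition n :=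
  ⟨{p + q + 2, p + q + 2, p + 1}, by intro i hi; simp at hi; omega, by simp; omega⟩

lemma cardC2c (n : ℕ) :
    (univ.filter fun lam : Nat.Partition n =>
      ∃ p q, 1 ≤ p ∧ 1 ≤ q ∧ lam.parts = {p + q, p + q, p}).card = Dd5 n := by
  rw [Dd5]
  refine (Finset.card_bij
    (fun x hx => ccPart n x.1 x.2 (by simp only [Finset.mem_filter] at hx; exact hx.2))
    ?_ ?_ ?_).symm
  · intro x hx
    simp only [Finset.mem_filter, Finset.mem_univ, true_and]
    refine ⟨x.1 + 1, x.2 + 1, by omega, by omega, ?_⟩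
    simp only [ccPart]
    rw [show x.1 + x.2 + 2 = (x.1 + 1) + (x.2 + 1) by omega]
  · intro a ha b hb e
    have e' := congrArg Nat.Partition.parts e
    simp only [ccPart] at e'
    rw [triple_eq (by omega) (by omega) (by omega) (by omega)] at e'
    have : a.1 = b.1 ∧ a.2 = b.2 := by omega
    exact Prod.ext this.1 this.2
  · intro lam hlam
    simp only [Finset.mem_filter, Finset.mem_univ, true_and] at hlam
    obtain ⟨p, q, hp, hq, e⟩ := hlam
    have hs := lam.parts_sum; rw [e] at hs; simp at hs
    refine ⟨(p - 1, q - 1), ?_, ?_⟩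
    · simp only [Finset.mem_filter, Finset.mem_product, Finset.mem_range]
      omega
    · refine Nat.Partition.ext ?_
      show ({(p-1) + (q-1) + 2, (p-1) + (q-1) + 2, (p-1) + 1} : Multiset ℕ) = lam.parts
      rw [e, show (p-1) + (q-1) + 2 = p + q by omega, show (p-1) + 1 = p by omega]

def c3Part (n p q : ℕ) (h : 3*p+2*q+6 ≤ n) : Nat.Partition n :=
  ⟨{n - (2*p+q+3), p + q + 2, p + 1}, by intro i hi; simp at hi; omega, by simp; omega⟩

lemma cardC3 (n : ℕ) :
    (univ.filter fun lam : Nat.Partition n =>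
      ∃ p q r, 1 ≤ p ∧ 1 ≤ q ∧ 1 ≤ r ∧ lam.parts = {p + q + r, p + q, p}).card = Tt6 n := by
  rw [Tt6]
  refine (Finset.card_bij
    (fun x hx => c3Part n x.1 x.2 (by simp only [Finset.mem_filter] at hx; exact hx.2))
    ?_ ?_ ?_).symm
  · intro x hx
    simp only [Finset.mem_filter] at hx
    simp only [Finset.mem_filter, Finset.mem_univ, true_and]
    refine ⟨x.1 + 1, x.2 + 1, n - (3*x.1+2*x.2+5), by omega, by omega, by omega, ?_⟩
    simp only [c3Part]
    rw [show x.1 + x.2 + 2 = (x.1 + 1) + (x.2 + 1) by omega,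
      show n - (2*x.1+x.2+3) = (x.1+1) + (x.2+1) + (n - (3*x.1+2*x.2+5)) by omega]
  · intro a ha b hb e
    simp only [Finset.mem_filter, Finset.mem_product, Finset.mem_range] at ha hb
    have e' := congrArg Nat.Partition.parts e
    simp only [c3Part] at e'
    rw [triple_eq (by omega) (by omega) (by omega) (by omega)] at e'
    have : a.1 = b.1 ∧ a.2 = b.2 := by omega
    exact Prod.ext this.1 this.2
  · intro lam hlam
    simp only [Finset.mem_filter, Finset.mem_univ, true_and] at hlam
    obtain ⟨p, q, r, hp, hq, hr, e⟩ := hlam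
    have hs := lam.parts_sum; rw [e] at hs; simp at hs
    refine ⟨(p - 1, q - 1), ?_, ?_⟩
    · simp only [Finset.mem_filter, Finset.mem_product, Finset.mem_range]
      omega
    · refine Nat.Partition.ext ?_
      show ({n - (2*(p-1)+(q-1)+3), (p-1) + (q-1) + 2, (p-1) + 1} : Multiset ℕ) = lam.parts
      rw [e, show (p-1) + (q-1) + 2 = p + q by omega, show (p-1) + 1 = p by omega,
        show n - (2*(p-1)+(q-1)+3) = p + q + r by omega]
lemma Tt4_rec (m : ℕ) (hm : 3 ≤ m) : Tt4 (m+6) = Tt4 m + (m+2) := by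
  have hsplit := Finset.card_filter_add_card_filter_not
    (s := (range (m+6+1) ×ˢ range (m+6+1)).filter fun x => 3*x.1+2*x.2+4 ≤ m+6)
    (p := fun x => 2 ≤ x.1)
  have part1 : (((range (m+6+1) ×ˢ range (m+6+1)).filter fun x => 3*x.1+2*x.2+4 ≤ m+6).filter
      fun x => 2 ≤ x.1).card = Tt4 m := by
    rw [Tt4]
    refine (Finset.card_bij (fun x _ => (x.1 + 2, x.2)) ?_ ?_ ?_).symm
    · intro x hx
      simp only [mem_filter, mem_product, mem_range] at hx ⊢
      omega
    · intro a ha b hb e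
      simp only [Prod.mk.injEq] at e
      exact Prod.ext (by omega) (by omega)
    · intro b hb
      simp only [mem_filter, mem_product, mem_range] at hb
      refine ⟨(b.1 - 2, b.2), ?_, ?_⟩
      · simp only [mem_filter, mem_product, mem_range]
        omega
      · exact Prod.ext (by simp; omega) (by simp)
  have part2 : (((range (m+6+1) ×ˢ range (m+6+1)).filter fun x => 3*x.1+2*x.2+4 ≤ m+6).filter
      fun x => ¬ 2 ≤ x.1).card = ((m+2)/2 + 1) + ((m-1)/2 + 1) := by
    have e : (((range (m+6+1) ×ˢ range (m+6+1)).filter fun x => 3*x.1+2*x.2+4 ≤ m+6).filter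
        fun x => ¬ 2 ≤ x.1)
        = ((Iic ((m+2)/2)).image fun a => ((0:ℕ), a))
          ∪ ((Iic ((m-1)/2)).image fun a => ((1:ℕ), a)) := by
      ext ⟨x1, x2⟩
      simp only [mem_filter, mem_product, mem_range, mem_union, mem_image, mem_Iic,
        Prod.mk.injEq]
      constructor
      · rintro ⟨⟨⟨h1, h2⟩, h3⟩, h4⟩
        interval_cases x1
        · exact Or.inl ⟨x2, by omega, rfl, rfl⟩
        · exact Or.inr ⟨x2, by omega, rfl, rfl⟩
      · rintro (⟨a, ha, rfl, rfl⟩ | ⟨a, ha, rfl, rfl⟩) <;> omega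
    rw [e, card_union_of_disjoint]
    · rw [Finset.card_image_of_injective _ (fun a b h => by simpa using h),
        Finset.card_image_of_injective _ (fun a b h => by simpa using h),
        Nat.card_Iic, Nat.card_Iic]
    · rw [Finset.disjoint_left]
      rintro ⟨x1, x2⟩ h1 h2
      simp only [mem_image, mem_Iic, Prod.mk.injEq] at h1 h2
      obtain ⟨a, _, e1, _⟩ := h1
      obtain ⟨b, _, e2, _⟩ := h2
      omega
  rw [Tt4]
  omega

lemma Tt6_rec (m : ℕ) (hm : 3 ≤ m) : Tt6 (m+6) = Tt6 m + m := by
  have hsplit := Finset.card_filter_add_card_filter_not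
    (s := (range (m+6+1) ×ˢ range (m+6+1)).filter fun x => 3*x.1+2*x.2+6 ≤ m+6)
    (p := fun x => 2 ≤ x.1)
  have part1 : (((range (m+6+1) ×ˢ range (m+6+1)).filter fun x => 3*x.1+2*x.2+6 ≤ m+6).filter
      fun x => 2 ≤ x.1).card = Tt6 m := by
    rw [Tt6]
    refine (Finset.card_bij (fun x _ => (x.1 + 2, x.2)) ?_ ?_ ?_).symm
    · intro x hx
      simp only [mem_filter, mem_product, mem_range] at hx ⊢
      omega
    · intro a ha b hb e
      simp only [Prod.mk.injEq] at e
      exact Prod.ext (by omega) (by omega)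
    · intro b hb
      simp only [mem_filter, mem_product, mem_range] at hb
      refine ⟨(b.1 - 2, b.2), ?_, ?_⟩
      · simp only [mem_filter, mem_product, mem_range]
        omega
      · exact Prod.ext (by simp; omega) (by simp)
  have part2 : (((range (m+6+1) ×ˢ range (m+6+1)).filter fun x => 3*x.1+2*x.2+6 ≤ m+6).filter
      fun x => ¬ 2 ≤ x.1).card = (m/2 + 1) + ((m-3)/2 + 1) := by
    have e : (((range (m+6+1) ×ˢ range (m+6+1)).filter fun x => 3*x.1+2*x.2+6 ≤ m+6).filter
        fun x => ¬ 2 ≤ x.1)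
        = ((Iic (m/2)).image fun a => ((0:ℕ), a))
          ∪ ((Iic ((m-3)/2)).image fun a => ((1:ℕ), a)) := by
      ext ⟨x1, x2⟩
      simp only [mem_filter, mem_product, mem_range, mem_union, mem_image, mem_Iic,
        Prod.mk.injEq]
      constructor
      · rintro ⟨⟨⟨h1, h2⟩, h3⟩, h4⟩
        interval_cases x1
        · exact Or.inl ⟨x2, by omega, rfl, rfl⟩
        · exact Or.inr ⟨x2, by omega, rfl, rfl⟩
      · rintro (⟨a, ha, rfl, rfl⟩ | ⟨a, ha, rfl, rfl⟩) <;> omega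
    rw [e, card_union_of_disjoint]
    · rw [Finset.card_image_of_injective _ (fun a b h => by simpa using h),
        Finset.card_image_of_injective _ (fun a b h => by simpa using h),
        Nat.card_Iic, Nat.card_Iic]
    · rw [Finset.disjoint_left]
      rintro ⟨x1, x2⟩ h1 h2
      simp only [mem_image, mem_Iic, Prod.mk.injEq] at h1 h2
      obtain ⟨a, _, e1, _⟩ := h1
      obtain ⟨b, _, e2, _⟩ := h2
      omega
  rw [Tt6]
  omega

lemma Dd5_rec (m : ℕ) (hm : 3 ≤ m) : Dd5 (m+6) = Dd5 m + 1 := by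
  have hsplit := Finset.card_filter_add_card_filter_not
    (s := (range (m+6+1) ×ˢ range (m+6+1)).filter fun x => 3*x.1+2*x.2+5 = m+6)
    (p := fun x => 2 ≤ x.1)
  have part1 : (((range (m+6+1) ×ˢ range (m+6+1)).filter fun x => 3*x.1+2*x.2+5 = m+6).filter
      fun x => 2 ≤ x.1).card = Dd5 m := by
    rw [Dd5]
    refine (Finset.card_bij (fun x _ => (x.1 + 2, x.2)) ?_ ?_ ?_).symm
    · intro x hx
      simp only [mem_filter, mem_product, mem_range] at hx ⊢
      omega
    · intro a ha b hb e
      simp only [Prod.mk.injEq] at e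
      exact Prod.ext (by omega) (by omega)
    · intro b hb
      simp only [mem_filter, mem_product, mem_range] at hb
      refine ⟨(b.1 - 2, b.2), ?_, ?_⟩
      · simp only [mem_filter, mem_product, mem_range]
        omega
      · exact Prod.ext (by simp; omega) (by simp)
  have part2 : (((range (m+6+1) ×ˢ range (m+6+1)).filter fun x => 3*x.1+2*x.2+5 = m+6).filter
      fun x => ¬ 2 ≤ x.1).card = 1 := by
    by_cases hpar : m % 2 = 0
    · have e : (((range (m+6+1) ×ˢ range (m+6+1)).filter fun x => 3*x.1+2*x.2+5 = m+6).filter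
          fun x => ¬ 2 ≤ x.1) = {((1:ℕ), (m-2)/2)} := by
        ext ⟨x1, x2⟩
        simp only [mem_filter, mem_product, mem_range, mem_singleton, Prod.mk.injEq]
        omega
      rw [e, card_singleton]
    · have e : (((range (m+6+1) ×ˢ range (m+6+1)).filter fun x => 3*x.1+2*x.2+5 = m+6).filter
          fun x => ¬ 2 ≤ x.1) = {((0:ℕ), (m+1)/2)} := by
        ext ⟨x1, x2⟩
        simp only [mem_filter, mem_product, mem_range, mem_singleton, Prod.mk.injEq]
        omega
      rw [e, card_singleton]
  rw [Dd5]
  omega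

lemma key : ∀ n : ℕ, 1 ≤ n →
    3 * (1 + ((if 2 ∣ n then 1 else 0) + ((if 3 ∣ n then 1 else 0) + Tt4 n))
      + (2 * ((n-1)/2 + ((n-1)/3 + Dd5 n)) + 3 * Tt6 n))
    = n^2 + n + (if n % 3 = 1 then 1 else 0) := by
  intro n
  induction n using Nat.strong_induction_on with
  | _ n ih =>
    intro hn
    by_cases h9 : n < 9
    · interval_cases n <;> decide
    · have hm : 3 ≤ n - 6 := by omega
      have h6 : n = (n - 6) + 6 := by omega
      set m := n - 6 with hmdef
      have ihm := ih m (by omega) (by omega)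
      rw [h6, Tt4_rec m hm, Dd5_rec m hm, Tt6_rec m hm]
      simp only [show (2 ∣ m + 6 ↔ 2 ∣ m) from by omega,
        show (3 ∣ m + 6 ↔ 3 ∣ m) from by omega,
        show (m + 6) % 3 = m % 3 from by omega,
        show (m + 6 - 1)/2 = (m-1)/2 + 3 from by omega,
        show (m + 6 - 1)/3 = (m-1)/3 + 2 from by omega]
      have hsq : (m+6)^2 = m^2 + (12*m + 36) := by ring
      rw [hsq]
      generalize (if 2 ∣ m then (1:ℕ) else 0) = A at ihm ⊢
      generalize (if 3 ∣ m then (1:ℕ) else 0) = B at ihm ⊢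
      generalize (if m % 3 = 1 then (1:ℕ) else 0) = C at ihm ⊢
      generalize m^2 = K at ihm ⊢
      omega

/-- the colength of `Ṽ₃`: the sum of the multiplicities `m_λ(Ṽ₃)`
over all partitions `λ` of `n` equals `(n² + n + δ)/3`, where `δ = 1` if
`n ≡ 1 (mod 3)` and `δ = 0` otherwise. -/
theorem colength_V3 (n : ℕ) (hn : 1 ≤ n) :
    ((∑ lam : Nat.Partition n, multV3 lam.parts : ℕ) : ℚ)
      = ((n : ℚ) ^ 2 + n + (if n % 3 = 1 then 1 else 0)) / 3 := by
  have hsum := sum_split n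
  simp only [C3] at hsum
  rw [cardC1_split, cardC2_split, cardC1a n hn, cardC1b n hn, cardC1c n hn, cardC1d,
    cardC2a, cardC2b, cardC2c] at hsum
  erw [cardC3] at hsum
  have hkey := key n hn
  rw [← hsum] at hkey
  have hq := congrArg (fun k : ℕ => (k : ℚ)) hkey
  push_cast at hq
  rw [eq_div_iff (by norm_num : (3:ℚ) ≠ 0)]
  by_cases h : n % 3 = 1 <;> simp [h] at hq ⊢ <;> linarith

end Main
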